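/- Fix n, m, N ≥ 1, bounds 0 < H_w ≤ H_w̄, H_λ ≥ 0, H_v ≥ 0, and j ∈ [n]. Let L_j be the class of functions on n-bidder, m-item valuation vectors given by v ↦ (1/w_j)·max_{o∈𝒪} ( Σ_{ℓ≠j} w_ℓ v_ℓ(o_ℓ) + λ(o) ), ranging over all weights with H_w ≤ w_i ≤ H_w̄ and boosts with |λ(o)| ≤ H_λ. Then for any probability distribution D over valuation vectors v with 0 ≤ v_i(b) ≤ H_v for all i and b, the Rademacher complexity satisfies R_N(L_j) ≤ ( (n+1)^m · Ĥ_v · (n·H_w̄ + H_λ) / H_w ) · √( 2·log(n·2^m + 1) / N ), where Ĥ_v = max{H_v, 1}. -/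

import Mathlib

open Finset MeasureTheory

/-- An `n`-bidder, `m`-item allocation: pairwise disjoint bundles of items. -/
def Alloc (n m : ℕ) : Type :=
  {o : Fin n → Finset (Fin m) // ∀ i j, i ≠ j → o i ∩ o j = ∅}

instance (n m : ℕ) : Inhabited (Alloc n m) :=
  ⟨⟨fun _ => ∅, fun _ _ _ => by simp⟩⟩

instance (n m : ℕ) : Fintype (Alloc n m) :=
  Subtype.fintype _

instance (n m : ℕ) : Nonempty (Alloc n m) := ⟨default⟩

/-- Maximum of a real-valued function over all allocations. -/
noncomputable def allocMax {n m : ℕ} (f : Alloc n m → ℝ) : ℝ :=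
  Finset.univ.sup' Finset.univ_nonempty f

/-- A fixed (canonical) maximizer of a real-valued function over all allocations. -/
noncomputable def chooseMax {n m : ℕ} (f : Alloc n m → ℝ) : Alloc n m :=
  Classical.choose (Finset.exists_max_image Finset.univ f Finset.univ_nonempty)

/-- `os` maximizes the boosted weighted social welfare. -/
def IsMaxAlloc {n m : ℕ} (w : Fin n → ℝ) (lam : Alloc n m → ℝ)
    (v : Fin n → Finset (Fin m) → ℝ) (os : Alloc n m) : Prop :=
  ∀ o : Alloc n m, (∑ j, w j * v j (o.1 j)) + lam o ≤ (∑ j, w j * v j (os.1 j)) + lam os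

/-- Revenue of the AMA with weights `w`, boosts `lam`, on valuations `v`, when the
chosen (welfare-maximizing) allocation is `os`. -/
noncomputable def amaRev {n m : ℕ} (w : Fin n → ℝ) (lam : Alloc n m → ℝ)
    (v : Fin n → Finset (Fin m) → ℝ) (os : Alloc n m) : ℝ :=
  ∑ j, (w j)⁻¹ *
    (allocMax (fun o => (∑ l ∈ Finset.univ.erase j, w l * v l (o.1 l)) + lam o)
      - ((∑ l ∈ Finset.univ.erase j, w l * v l (os.1 l)) + lam os))

/-- The boosts of the `c`-MBA. -/
def mbaLam {n m : ℕ} (c : ℝ) : Alloc n m → ℝ :=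
  fun o => if ∃ i, o.1 i = Finset.univ then c else 0

/-- Revenue of the `c`-MBA (with a fixed tie-breaking rule). -/
noncomputable def mbaRev {n m : ℕ} (v : Fin n → Finset (Fin m) → ℝ) (c : ℝ) : ℝ :=
  amaRev (fun _ => 1) (mbaLam c) v
    (chooseMax fun o => (∑ j, v j (o.1 j)) + mbaLam c o)

/-- Revenue of the MBARP with grand-bundle boost `c` and item reserve prices `r`
(with a fixed tie-breaking rule); the seller participates as bidder `0`. -/
noncomputable def mbarpRev {n m : ℕ} (v : Fin n → Finset (Fin m) → ℝ) (c : ℝ)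
    (r : Fin m → ℝ) : ℝ :=
  let vx : Fin (n + 1) → Finset (Fin m) → ℝ :=
    fun i b => Fin.cases (∑ j ∈ b, r j) (fun i' => v i' b) i
  let g : Fin (n + 1) → Alloc (n + 1) m → ℝ :=
    fun i o => (∑ l ∈ Finset.univ.erase i, vx l (o.1 l)) + mbaLam c o
  let os : Alloc (n + 1) m := chooseMax fun o => (∑ i, vx i (o.1 i)) + mbaLam c o
  ∑ i : Fin n, (allocMax (g i.succ) - g i.succ os)

/-- Empirical Rademacher complexity of a class `F` on the sample `S`. -/
noncomputable def empRad {X : Type*} (F : Set (X → ℝ)) {N : ℕ} (S : Fin N → X) : ℝ :=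
  ((2 : ℝ) ^ N)⁻¹ * ∑ σ : Fin N → Bool,
    ⨆ f ∈ F, (N : ℝ)⁻¹ * ∑ i, (if σ i then (1 : ℝ) else -1) * f (S i)

/-- Rademacher complexity: expected empirical Rademacher complexity over i.i.d. samples. -/
noncomputable def radComp {X : Type*} [MeasurableSpace X] (D : Measure X)
    (F : Set (X → ℝ)) (N : ℕ) : ℝ :=
  ∫ S, empRad F S ∂(Measure.pi fun _ : Fin N => D)

/-- Pseudo-shattering of the tuple `x` by the class `F`, with witnesses `z`. -/
def PShatters {X : Type*} (F : Set (X → ℝ)) {k : ℕ} (x : Fin k → X) : Prop :=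
  ∃ z : Fin k → ℝ, ∀ T : Finset (Fin k), ∃ f ∈ F,
    (∀ i, i ∈ T → f (x i) ≤ z i) ∧ (∀ i, i ∉ T → z i < f (x i))

/-- A valuation is additive if it is determined by its values on singletons. -/
def AdditiveVal {n m : ℕ} (v : Fin n → Finset (Fin m) → ℝ) : Prop :=
  ∀ i b, v i b = ∑ j ∈ b, v i {j}

/-- Valuation vectors with values in `[0, Hv]` (and zero on the empty bundle). -/
abbrev ValB (n m : ℕ) (Hv : ℝ) : Type :=
  {v : Fin n → Finset (Fin m) → ℝ // (∀ i, v i ∅ = 0) ∧ ∀ i b, 0 ≤ v i b ∧ v i b ≤ Hv}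

/-- The class `L_j`: `v ↦ (1/w_j)·max_{o∈𝒪} (Σ_{ℓ≠j} w_ℓ v_ℓ(o_ℓ) + λ(o))`,
over all admissible weights and boosts. -/
def LjClass (n m : ℕ) (Hw Hwb Hlam Hv : ℝ) (j : Fin n) : Set (ValB n m Hv → ℝ) :=
  {f | ∃ (w : Fin n → ℝ) (lam : Alloc n m → ℝ),
    (∀ i, Hw ≤ w i ∧ w i ≤ Hwb) ∧ (∀ o, |lam o| ≤ Hlam) ∧
    f = fun v => (w j)⁻¹ *
      allocMax (fun o => (∑ l ∈ Finset.univ.erase j, w l * v.1 l (o.1 l)) + lam o)}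

namespace Stmt5Aux

noncomputable def eps {N : ℕ} (σ : Fin N → Bool) (i : Fin N) : ℝ := if σ i then 1 else -1

lemma abs_eps {N : ℕ} (σ : Fin N → Bool) (i : Fin N) : |eps σ i| = 1 := by
  unfold eps; split <;> simp

lemma eps_mul_self {N : ℕ} (σ : Fin N → Bool) (i : Fin N) : eps σ i * eps σ i = 1 := by
  unfold eps; split <;> norm_num

def flip {N : ℕ} (k : Fin N) (σ : Fin N → Bool) : Fin N → Bool := Function.update σ k (!σ k)

lemma flip_involutive {N : ℕ} (k : Fin N) : Function.Involutive (flip k) := by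
  intro σ; funext i
  by_cases h : i = k
  · subst h; simp [flip]
  · simp [flip, Function.update_of_ne h]

lemma sum_flip {N : ℕ} (k : Fin N) (F : (Fin N → Bool) → ℝ) :
    ∑ σ : Fin N → Bool, F (flip k σ) = ∑ σ : Fin N → Bool, F σ :=
  Equiv.sum_comp ((flip_involutive k).toPerm _) F

lemma eps_flip_self {N : ℕ} (k : Fin N) (σ : Fin N → Bool) : eps (flip k σ) k = -eps σ k := by
  simp only [eps, flip, Function.update_self]
  cases h : σ k <;> simp [h]

lemma eps_flip_ne {N : ℕ} (k i : Fin N) (σ : Fin N → Bool) (h : i ≠ k) :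
    eps (flip k σ) i = eps σ i := by
  simp only [eps, flip, Function.update_of_ne h]

lemma bool_aux (b : Bool) : (if (!b) = true then (1:ℝ) else -1) = -if b = true then 1 else -1 := by
  cases b <;> simp

lemma eps_not {N : ℕ} (σ : Fin N → Bool) (i : Fin N) :
    eps (fun i => !σ i) i = -eps σ i := by
  simp only [eps]; exact bool_aux (σ i)

lemma sum_eps_mul_eps {N : ℕ} (i k : Fin N) (h : i ≠ k) :
    ∑ σ : Fin N → Bool, eps σ i * eps σ k = 0 := by
  have h1 := sum_flip k (fun σ => eps σ i * eps σ k)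
  have h2 : ∀ σ : Fin N → Bool, eps (flip k σ) i * eps (flip k σ) k
      = -(eps σ i * eps σ k) := by
    intro σ; rw [eps_flip_ne k i σ h, eps_flip_self]; ring
  simp only [h2, Finset.sum_neg_distrib] at h1
  linarith

lemma sum_eps_inner_sq {N : ℕ} (x : Fin N → ℝ) :
    ∑ σ : Fin N → Bool, (∑ i, eps σ i * x i) ^ 2 = 2 ^ N * ∑ i, (x i) ^ 2 := by
  have expand : ∀ σ : Fin N → Bool, (∑ i, eps σ i * x i) ^ 2
      = ∑ i, ∑ k, (x i * x k) * (eps σ i * eps σ k) := by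
    intro σ
    rw [sq, Finset.sum_mul_sum]
    exact Finset.sum_congr rfl fun i _ => Finset.sum_congr rfl fun k _ => by ring
  simp only [expand]
  rw [Finset.sum_comm]
  have : ∀ i : Fin N, ∑ σ : Fin N → Bool, ∑ k, (x i * x k) * (eps σ i * eps σ k)
      = 2 ^ N * (x i) ^ 2 := by
    intro i
    rw [Finset.sum_comm]
    have : ∀ k : Fin N, ∑ σ : Fin N → Bool, (x i * x k) * (eps σ i * eps σ k)
        = if i = k then 2 ^ N * (x i) ^ 2 else 0 := by
      intro k
      rw [← Finset.mul_sum]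
      by_cases h : i = k
      · subst h
        simp only [if_pos rfl]
        rw [Finset.sum_congr rfl fun σ _ => eps_mul_self σ i]
        simp [Fintype.card_fun]
        ring
      · rw [sum_eps_mul_eps i k h, mul_zero, if_neg h]
    rw [Finset.sum_congr rfl fun k _ => this k, Finset.sum_ite_eq]
    simp
  rw [Finset.sum_congr rfl fun i _ => this i, ← Finset.mul_sum]

lemma khintchine {N : ℕ} (x : Fin N → ℝ) :
    ∑ σ : Fin N → Bool, |∑ i, eps σ i * x i| ≤ 2 ^ N * Real.sqrt (∑ i, (x i) ^ 2) := by
  have cs := Finset.sum_mul_sq_le_sq_mul_sq Finset.univ (fun _ : Fin N → Bool => (1:ℝ))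
    (fun σ => |∑ i, eps σ i * x i|)
  simp only [one_mul, one_pow, sq_abs] at cs
  rw [Finset.sum_const, Finset.card_univ, Fintype.card_fun, Fintype.card_bool,
    Fintype.card_fin, nsmul_eq_mul, mul_one, sum_eps_inner_sq] at cs
  push_cast at cs
  have h1 : (0:ℝ) ≤ ∑ σ : Fin N → Bool, |∑ i, eps σ i * x i| :=
    Finset.sum_nonneg fun σ _ => abs_nonneg _
  have h2 : (0:ℝ) ≤ ∑ i, (x i) ^ 2 := Finset.sum_nonneg fun i _ => sq_nonneg _
  have := Real.sqrt_le_sqrt cs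
  rwa [Real.sqrt_sq h1, show ((2:ℝ)^N * ((2:ℝ)^N * ∑ i, (x i)^2)) = ((2:ℝ)^N)^2 * ∑ i, (x i)^2 by ring,
    Real.sqrt_mul (sq_nonneg _), Real.sqrt_sq (by positivity)] at this


set_option linter.unusedSectionVars false
section Contraction

variable {Θ : Type} [Nonempty Θ] {N : ℕ}

lemma sum_le_of_bound (σ : Fin N → Bool) (t : Θ → Fin N → ℝ) (C : ℝ)
    (hC : ∀ θ i, |t θ i| ≤ C) (θ : Θ) : ∑ i, eps σ i * t θ i ≤ N * C := by
  calc ∑ i, eps σ i * t θ i ≤ ∑ i : Fin N, C := by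
        refine Finset.sum_le_sum fun i _ => ?_
        calc eps σ i * t θ i ≤ |eps σ i * t θ i| := le_abs_self _
        _ = |t θ i| := by rw [abs_mul, abs_eps, one_mul]
        _ ≤ C := hC θ i
    _ = N * C := by rw [Finset.sum_const, Finset.card_univ, Fintype.card_fin, nsmul_eq_mul]

lemma bdd_of_bound (σ : Fin N → Bool) (t : Θ → Fin N → ℝ) (C : ℝ)
    (hC : ∀ θ i, |t θ i| ≤ C) :
    BddAbove (Set.range fun θ => ∑ i, eps σ i * t θ i) := by
  refine ⟨N * C, ?_⟩
  rintro _ ⟨θ, rfl⟩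
  exact sum_le_of_bound σ t C hC θ

lemma two_point (B r : Θ → ℝ)
    (h1 : BddAbove (Set.range fun θ => B θ + r θ))
    (h2 : BddAbove (Set.range fun θ => B θ - r θ)) :
    (⨆ θ, (B θ + |r θ|)) + ⨆ θ, (B θ - |r θ|) ≤ (⨆ θ, (B θ + r θ)) + ⨆ θ, (B θ - r θ) := by
  set RHS := (⨆ θ, (B θ + r θ)) + ⨆ θ, (B θ - r θ) with hR
  have key : ∀ θ θ' : Θ, (B θ + |r θ|) + (B θ' - |r θ'|) ≤ RHS := by
    intro θ θ'
    have habs : |r θ| - |r θ'| ≤ |r θ - r θ'| := abs_sub_abs_le_abs_sub _ _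
    rcases le_total (r θ') (r θ) with h | h
    · have : |r θ - r θ'| = r θ - r θ' := abs_of_nonneg (by linarith)
      have l1 : B θ + r θ ≤ ⨆ θ, (B θ + r θ) := le_ciSup h1 θ
      have l2 : B θ' - r θ' ≤ ⨆ θ, (B θ - r θ) := le_ciSup h2 θ'
      rw [hR]; linarith
    · have : |r θ - r θ'| = r θ' - r θ := by rw [abs_of_nonpos (by linarith : r θ - r θ' ≤ 0)]; ring
      have l1 : B θ' + r θ' ≤ ⨆ θ, (B θ + r θ) := le_ciSup h1 θ'
      have l2 : B θ - r θ ≤ ⨆ θ, (B θ - r θ) := le_ciSup h2 θ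
      rw [hR]; linarith
  have step : ∀ θ : Θ, (B θ + |r θ|) ≤ RHS - ⨆ θ, (B θ - |r θ|) := by
    intro θ
    have : (⨆ θ', (B θ' - |r θ'|)) ≤ RHS - (B θ + |r θ|) :=
      ciSup_le fun θ' => by linarith [key θ θ']
    linarith
  have := ciSup_le step
  linarith

end Contraction

section Contraction2

variable {Θ : Type} [Nonempty Θ] {N : ℕ}

lemma contraction_step (t : Θ → Fin N → ℝ) (C : ℝ) (hC : ∀ θ i, |t θ i| ≤ C)
    (s : Finset (Fin N)) (k : Fin N) (hk : k ∉ s) :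
    ∑ σ : Fin N → Bool, ⨆ θ, ∑ i, eps σ i * (if i ∈ insert k s then |t θ i| else t θ i) ≤
    ∑ σ : Fin N → Bool, ⨆ θ, ∑ i, eps σ i * (if i ∈ s then |t θ i| else t θ i) := by
  classical
  have hC0 : 0 ≤ C := le_trans (abs_nonneg _) (hC (Classical.arbitrary Θ) k)
  set q : Θ → Fin N → ℝ := fun θ i => if i ∈ s then |t θ i| else t θ i with hq
  have hqC : ∀ θ i, |q θ i| ≤ C := by
    intro θ i; by_cases h : i ∈ s <;> simp [hq, h, abs_abs, hC θ i]
  set Bf : Θ → (Fin N → Bool) → ℝ := fun θ σ => ∑ i ∈ Finset.univ.erase k, eps σ i * q θ i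
    with hBf
  have hBfC : ∀ θ σ, |Bf θ σ| ≤ N * C := by
    intro θ σ
    calc |Bf θ σ| ≤ ∑ i ∈ Finset.univ.erase k, |eps σ i * q θ i| :=
          Finset.abs_sum_le_sum_abs _ _
      _ ≤ ∑ i ∈ Finset.univ.erase k, C := by
          refine Finset.sum_le_sum fun i _ => ?_
          rw [abs_mul, abs_eps, one_mul]; exact hqC θ i
      _ = (Finset.univ.erase k).card * C := by rw [Finset.sum_const, nsmul_eq_mul]
      _ ≤ N * C := by
          refine mul_le_mul_of_nonneg_right ?_ hC0
          have : (Finset.univ.erase k).card ≤ N := le_trans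
            (Finset.card_le_card (Finset.erase_subset _ _)) (by simp)
          exact_mod_cast this
  have hdecompL : ∀ θ σ, ∑ i, eps σ i * (if i ∈ insert k s then |t θ i| else t θ i)
      = Bf θ σ + eps σ k * |t θ k| := by
    intro θ σ
    rw [← Finset.sum_erase_add Finset.univ _ (Finset.mem_univ k)]
    congr 1
    · refine Finset.sum_congr rfl fun i hi => ?_
      have hik : i ≠ k := (Finset.mem_erase.mp hi).1
      simp only [hq, Finset.mem_insert, hik, false_or]
    · simp [Finset.mem_insert]
  have hdecompR : ∀ θ σ, ∑ i, eps σ i * q θ i = Bf θ σ + eps σ k * t θ k := by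
    intro θ σ
    rw [← Finset.sum_erase_add Finset.univ _ (Finset.mem_univ k)]
    congr 1
    simp [hq, hk]
  have hBflip : ∀ θ σ, Bf θ (flip k σ) = Bf θ σ := by
    intro θ σ
    refine Finset.sum_congr rfl fun i hi => ?_
    rw [eps_flip_ne k i σ (Finset.mem_erase.mp hi).1]
  -- bddAbove facts
  have bdd1 : ∀ σ : Fin N → Bool, BddAbove (Set.range fun θ => Bf θ σ + t θ k) := by
    intro σ
    refine ⟨N * C + C, ?_⟩
    rintro _ ⟨θ, rfl⟩
    have h1 := (abs_le.mp (hBfC θ σ)).2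
    have h2 := (abs_le.mp (hC θ k)).2
    simpa using add_le_add h1 h2
  have bdd2 : ∀ σ : Fin N → Bool, BddAbove (Set.range fun θ => Bf θ σ - t θ k) := by
    intro σ
    refine ⟨N * C + C, ?_⟩
    rintro _ ⟨θ, rfl⟩
    have h1 := (abs_le.mp (hBfC θ σ)).2
    have h2 := (abs_le.mp (hC θ k)).1
    simp only
    linarith
  -- per-σ two point
  set X : (Fin N → Bool) → ℝ := fun σ => ⨆ θ, (Bf θ σ + eps σ k * |t θ k|) with hX
  set Y : (Fin N → Bool) → ℝ := fun σ => ⨆ θ, (Bf θ σ + eps σ k * t θ k) with hY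
  have perσ : ∀ σ, X σ + X (flip k σ) ≤ Y σ + Y (flip k σ) := by
    intro σ
    have tp := two_point (fun θ => Bf θ σ) (fun θ => t θ k) (bdd1 σ) (bdd2 σ)
    have eX : X (flip k σ) = ⨆ θ, (Bf θ σ + -eps σ k * |t θ k|) := by
      simp only [hX]
      exact iSup_congr fun θ => by rw [hBflip, eps_flip_self]
    have eY : Y (flip k σ) = ⨆ θ, (Bf θ σ + -eps σ k * t θ k) := by
      simp only [hY]
      exact iSup_congr fun θ => by rw [hBflip, eps_flip_self]
    have hXσ : X σ = ⨆ θ, (Bf θ σ + eps σ k * |t θ k|) := by simp only [hX]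
    have hYσ : Y σ = ⨆ θ, (Bf θ σ + eps σ k * t θ k) := by simp only [hY]
    rw [eX, eY, hXσ, hYσ]
    rcases Bool.eq_false_or_eq_true (σ k) with h | h
    · have he : eps σ k = 1 := by simp [eps, h]
      simp only [he, neg_neg, neg_one_mul, one_mul, ← sub_eq_add_neg]
      linarith
    · have he : eps σ k = -1 := by simp [eps, h]
      simp only [he, neg_neg, neg_one_mul, one_mul, ← sub_eq_add_neg]
      linarith
  -- sum up
  have hXsum : ∑ σ : Fin N → Bool, ⨆ θ, ∑ i, eps σ i * (if i ∈ insert k s then |t θ i| else t θ i)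
      = ∑ σ : Fin N → Bool, X σ := by
    refine Finset.sum_congr rfl fun σ _ => ?_
    rw [hX]; congr 1; funext θ; exact hdecompL θ σ
  have hYsum : ∑ σ : Fin N → Bool, ⨆ θ, ∑ i, eps σ i * q θ i = ∑ σ : Fin N → Bool, Y σ := by
    refine Finset.sum_congr rfl fun σ _ => ?_
    rw [hY]; congr 1; funext θ; exact hdecompR θ σ
  rw [hXsum, hYsum]
  have hx2 : (2:ℝ) * ∑ σ : Fin N → Bool, X σ ≤ 2 * ∑ σ : Fin N → Bool, Y σ := by
    have fx := sum_flip k X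
    have fy := sum_flip k Y
    calc (2:ℝ) * ∑ σ : Fin N → Bool, X σ = ∑ σ : Fin N → Bool, (X σ + X (flip k σ)) := by
          rw [Finset.sum_add_distrib, fx]; ring
      _ ≤ ∑ σ : Fin N → Bool, (Y σ + Y (flip k σ)) := Finset.sum_le_sum fun σ _ => perσ σ
      _ = 2 * ∑ σ : Fin N → Bool, Y σ := by rw [Finset.sum_add_distrib, fy]; ring
  linarith

lemma contraction_abs (t : Θ → Fin N → ℝ) (C : ℝ) (hC : ∀ θ i, |t θ i| ≤ C) :
    ∑ σ : Fin N → Bool, ⨆ θ, ∑ i, eps σ i * |t θ i| ≤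
    ∑ σ : Fin N → Bool, ⨆ θ, ∑ i, eps σ i * t θ i := by
  classical
  have aux : ∀ s : Finset (Fin N),
      ∑ σ : Fin N → Bool, ⨆ θ, ∑ i, eps σ i * (if i ∈ s then |t θ i| else t θ i) ≤
      ∑ σ : Fin N → Bool, ⨆ θ, ∑ i, eps σ i * t θ i := by
    intro s
    induction s using Finset.induction_on with
    | empty => simp
    | insert k s hk ih =>
        exact le_trans (contraction_step t C hC _ _ hk) ih
  have := aux Finset.univ
  simpa using this

end Contraction2

section MaxSplit

variable {Θ : Type} [Nonempty Θ] {N : ℕ}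

lemma sum_sup_neg (w : Θ → Fin N → ℝ) :
    ∑ σ : Fin N → Bool, ⨆ θ, ∑ i, eps σ i * (-w θ i)
    = ∑ σ : Fin N → Bool, ⨆ θ, ∑ i, eps σ i * w θ i := by
  have hinv : Function.Involutive (fun σ : Fin N → Bool => (fun i => !σ i)) := by
    intro σ; funext i; simp
  have := Equiv.sum_comp (hinv.toPerm _)
    (fun σ : Fin N → Bool => ⨆ θ, ∑ i, eps σ i * (-w θ i))
  rw [← this]
  refine Finset.sum_congr rfl fun σ _ => ?_
  have : ∀ θ, ∑ i, eps ((hinv.toPerm _) σ) i * (-w θ i) = ∑ i, eps σ i * w θ i := by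
    intro θ
    refine Finset.sum_congr rfl fun i _ => ?_
    have : eps ((hinv.toPerm _) σ) i = -eps σ i := eps_not σ i
    rw [this]; ring
  exact iSup_congr this

lemma max_eq_half (a b : ℝ) : max a b = (a + b + |a - b|) / 2 := by
  rcases le_total a b with h | h
  · rw [max_eq_right h, abs_of_nonpos (by linarith : a - b ≤ 0)]; ring
  · rw [max_eq_left h, abs_of_nonneg (by linarith : 0 ≤ a - b)]; ring

lemma max_split (u w : Θ → Fin N → ℝ) (C : ℝ)
    (hu : ∀ θ i, |u θ i| ≤ C) (hw : ∀ θ i, |w θ i| ≤ C) :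
    ∑ σ : Fin N → Bool, ⨆ θ, ∑ i, eps σ i * max (u θ i) (w θ i) ≤
    (∑ σ : Fin N → Bool, ⨆ θ, ∑ i, eps σ i * u θ i) +
    ∑ σ : Fin N → Bool, ⨆ θ, ∑ i, eps σ i * w θ i := by
  classical
  set P : (Fin N → Bool) → ℝ := fun σ => ⨆ θ, ∑ i, eps σ i * u θ i with hP
  set Q : (Fin N → Bool) → ℝ := fun σ => ⨆ θ, ∑ i, eps σ i * w θ i with hQ
  set Rr : (Fin N → Bool) → ℝ := fun σ => ⨆ θ, ∑ i, eps σ i * |u θ i - w θ i| with hRr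
  set Dd : (Fin N → Bool) → ℝ := fun σ => ⨆ θ, ∑ i, eps σ i * (u θ i - w θ i) with hDd
  set Qn : (Fin N → Bool) → ℝ := fun σ => ⨆ θ, ∑ i, eps σ i * (-w θ i) with hQn
  have hd : ∀ θ i, |u θ i - w θ i| ≤ 2 * C := by
    intro θ i
    calc |u θ i - w θ i| ≤ |u θ i| + |w θ i| := abs_sub _ _
      _ ≤ 2 * C := by linarith [hu θ i, hw θ i]
  have bddP : ∀ σ, BddAbove (Set.range fun θ => ∑ i, eps σ i * u θ i) :=
    fun σ => bdd_of_bound σ u C hu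
  have bddQ : ∀ σ, BddAbove (Set.range fun θ => ∑ i, eps σ i * w θ i) :=
    fun σ => bdd_of_bound σ w C hw
  have bddR : ∀ σ, BddAbove (Set.range fun θ => ∑ i, eps σ i * |u θ i - w θ i|) :=
    fun σ => bdd_of_bound σ (fun θ i => |u θ i - w θ i|) (2*C) (fun θ i => by
      rw [abs_abs]; exact hd θ i)
  have bddQn : ∀ σ, BddAbove (Set.range fun θ => ∑ i, eps σ i * (-w θ i)) :=
    fun σ => bdd_of_bound σ (fun θ i => -w θ i) C (fun θ i => by rw [abs_neg]; exact hw θ i)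
  have step1 : ∀ σ, (⨆ θ, ∑ i, eps σ i * max (u θ i) (w θ i)) ≤ (P σ + Q σ + Rr σ)/2 := by
    intro σ
    refine ciSup_le fun θ => ?_
    have hsum : ∑ i, eps σ i * max (u θ i) (w θ i)
        = ((∑ i, eps σ i * u θ i) + (∑ i, eps σ i * w θ i)
          + ∑ i, eps σ i * |u θ i - w θ i|)/2 := by
      rw [← Finset.sum_add_distrib, ← Finset.sum_add_distrib, Finset.sum_div]
      refine Finset.sum_congr rfl fun i _ => ?_
      rw [max_eq_half]; ring
    rw [hsum]
    have l1 := le_ciSup (bddP σ) θ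
    have l2 := le_ciSup (bddQ σ) θ
    have l3 := le_ciSup (bddR σ) θ
    rw [hP, hQ, hRr]
    simp only at l1 l2 l3 ⊢
    linarith
  have step3 : ∀ σ, Dd σ ≤ P σ + Qn σ := by
    intro σ
    refine ciSup_le fun θ => ?_
    have hsum : ∑ i, eps σ i * (u θ i - w θ i)
        = (∑ i, eps σ i * u θ i) + ∑ i, eps σ i * (-w θ i) := by
      rw [← Finset.sum_add_distrib]
      refine Finset.sum_congr rfl fun i _ => by ring
    rw [hsum]
    exact add_le_add (le_ciSup (bddP σ) θ) (le_ciSup (bddQn σ) θ)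
  have hcontr : ∑ σ : Fin N → Bool, Rr σ ≤ ∑ σ : Fin N → Bool, Dd σ :=
    contraction_abs (fun θ i => u θ i - w θ i) (2*C) hd
  have hqn : ∑ σ : Fin N → Bool, Qn σ = ∑ σ : Fin N → Bool, Q σ := sum_sup_neg w
  calc ∑ σ : Fin N → Bool, ⨆ θ, ∑ i, eps σ i * max (u θ i) (w θ i)
      ≤ ∑ σ : Fin N → Bool, (P σ + Q σ + Rr σ)/2 := Finset.sum_le_sum fun σ _ => step1 σ
    _ = ((∑ σ : Fin N → Bool, P σ) + (∑ σ : Fin N → Bool, Q σ)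
        + ∑ σ : Fin N → Bool, Rr σ)/2 := by
        rw [← Finset.sum_div, ← Finset.sum_add_distrib, ← Finset.sum_add_distrib]
    _ ≤ ((∑ σ : Fin N → Bool, P σ) + (∑ σ : Fin N → Bool, Q σ)
        + ((∑ σ : Fin N → Bool, P σ) + ∑ σ : Fin N → Bool, Q σ))/2 := by
        have : ∑ σ : Fin N → Bool, Dd σ ≤ (∑ σ : Fin N → Bool, P σ)
            + ∑ σ : Fin N → Bool, Qn σ := by
          rw [← Finset.sum_add_distrib]
          exact Finset.sum_le_sum fun σ _ => step3 σ
        rw [hqn] at this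
        have h2 := le_trans hcontr this
        linarith
    _ = (∑ σ : Fin N → Bool, P σ) + ∑ σ : Fin N → Bool, Q σ := by ring

end MaxSplit

section SupSplit

variable {Θ : Type} [Nonempty Θ] {N : ℕ}

lemma abs_sup'_le {ι : Type*} (O : Finset ι) (hO : O.Nonempty) (f : ι → ℝ) (C : ℝ)
    (hC : ∀ o, |f o| ≤ C) : |O.sup' hO f| ≤ C := by
  rw [abs_le]
  constructor
  · obtain ⟨o, ho⟩ := hO
    exact le_trans (abs_le.mp (hC o)).1 (Finset.le_sup' f ho)
  · exact Finset.sup'_le _ _ fun o _ => (abs_le.mp (hC o)).2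

lemma sup'_split {ι : Type*} (O : Finset ι) (hO : O.Nonempty) (h : Θ → ι → Fin N → ℝ)
    (C : ℝ) (hC : ∀ θ o i, |h θ o i| ≤ C) :
    ∑ σ : Fin N → Bool, ⨆ θ, ∑ i, eps σ i * (O.sup' hO fun o => h θ o i) ≤
    ∑ o ∈ O, ∑ σ : Fin N → Bool, ⨆ θ, ∑ i, eps σ i * h θ o i := by
  classical
  induction hO using Finset.Nonempty.cons_induction with
  | singleton a => simp
  | cons a s ha hs ih =>
      have hcons : ∀ θ i, ((Finset.cons a s ha).sup' (Finset.cons_nonempty ha) fun o => h θ o i)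
          = max (h θ a i) (s.sup' hs fun o => h θ o i) := by
        intro θ i
        rw [Finset.sup'_cons hs]
      have e1 : ∑ σ : Fin N → Bool, ⨆ θ, ∑ i, eps σ i *
            ((Finset.cons a s ha).sup' (Finset.cons_nonempty ha) fun o => h θ o i)
          = ∑ σ : Fin N → Bool, ⨆ θ, ∑ i, eps σ i *
            max (h θ a i) (s.sup' hs fun o => h θ o i) := by
        refine Finset.sum_congr rfl fun σ _ => ?_
        exact iSup_congr fun θ => Finset.sum_congr rfl fun i _ => by rw [hcons]
      rw [e1, Finset.sum_cons]
      have hwbd : ∀ θ i, |s.sup' hs fun o => h θ o i| ≤ C :=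
        fun θ i => abs_sup'_le s hs _ C fun o => hC θ o i
      exact le_trans
        (max_split (fun θ i => h θ a i) (fun θ i => s.sup' hs fun o => h θ o i) C
          (fun θ i => hC θ a i) hwbd)
        (add_le_add_right ih _)

end SupSplit


lemma card_alloc_le (n m : ℕ) : (Fintype.card (Alloc n m) : ℝ) ≤ ((n:ℝ)+1)^m := by
  classical
  set owner : Alloc n m → (Fin m → Option (Fin n)) := fun o x =>
    if h : ∃ i, x ∈ o.1 i then some h.choose else none with howner
  have hmem : ∀ (o : Alloc n m) (x : Fin m) (i : Fin n), owner o x = some i ↔ x ∈ o.1 i := by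
    intro o x i
    constructor
    · intro hx
      by_cases h : ∃ i, x ∈ o.1 i
      · simp only [howner, dif_pos h] at hx
        obtain rfl : h.choose = i := Option.some_injective _ hx
        exact h.choose_spec
      · simp [howner, dif_neg h] at hx
    · intro hx
      have h : ∃ i, x ∈ o.1 i := ⟨i, hx⟩
      simp only [howner, dif_pos h]
      congr 1
      by_contra hne
      have hx2 : x ∈ o.1 h.choose ∩ o.1 i := Finset.mem_inter.mpr ⟨h.choose_spec, hx⟩
      rw [o.2 h.choose i hne] at hx2
      exact absurd hx2 (Finset.notMem_empty x)
  have hinj : Function.Injective owner := by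
    intro o o' he
    apply Subtype.ext
    funext i
    ext x
    constructor
    · intro hx
      exact (hmem o' x i).mp (by rw [← he]; exact (hmem o x i).mpr hx)
    · intro hx
      exact (hmem o x i).mp (by rw [he]; exact (hmem o' x i).mpr hx)
  have hcard := Fintype.card_le_of_injective owner hinj
  have hcf : Fintype.card (Fin m → Option (Fin n)) = (n+1)^m := by
    rw [Fintype.card_fun]
    simp
  rw [hcf] at hcard
  calc (Fintype.card (Alloc n m) : ℝ) ≤ (((n+1)^m : ℕ) : ℝ) := by exact_mod_cast hcard
    _ = ((n:ℝ)+1)^m := by push_cast; ring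

end Stmt5Aux

open Stmt5Aux in
/-- Rademacher complexity bound for the class `L_j`. -/
theorem stmt5 (n m N : ℕ) (hn : 1 ≤ n) (hm : 1 ≤ m) (hN : 1 ≤ N)
    (Hw Hwb Hlam Hv : ℝ) (hHw : 0 < Hw) (hw : Hw ≤ Hwb) (hl : 0 ≤ Hlam) (hv : 0 ≤ Hv)
    (j : Fin n)
    (D : Measure (ValB n m Hv)) [IsProbabilityMeasure D] :
    radComp D (LjClass n m Hw Hwb Hlam Hv j) N ≤
      ((n : ℝ) + 1) ^ m * max Hv 1 * ((n : ℝ) * Hwb + Hlam) / Hw *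
        Real.sqrt (2 * Real.log ((n : ℝ) * 2 ^ m + 1) / N) := by
  classical
  have hHwb : 0 < Hwb := lt_of_lt_of_le hHw hw
  have hN0 : (0:ℝ) < N := by exact_mod_cast hN
  set F := LjClass n m Hw Hwb Hlam Hv j with hF
  set d : ℝ := (n : ℝ) * 2 ^ m + 1 with hd
  set R : ℝ := ((n : ℝ) + 1) ^ m * max Hv 1 * ((n : ℝ) * Hwb + Hlam) / Hw *
      Real.sqrt (2 * Real.log ((n : ℝ) * 2 ^ m + 1) / N) with hR
  have hn1 : (1:ℝ) ≤ (n:ℝ) := by exact_mod_cast hn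
  have hnHL : 0 ≤ (n:ℝ) * Hwb + Hlam := by nlinarith
  have hmax1 : (1:ℝ) ≤ max Hv 1 := le_max_right _ _
  have hmaxv : Hv ≤ max Hv 1 := le_max_left _ _
  have hlogd : (1:ℝ) ≤ Real.log d := by
    have hm' : (2:ℝ) ≤ 2 ^ m := by
      calc (2:ℝ) = 2^1 := (pow_one 2).symm
      _ ≤ 2^m := pow_le_pow_right₀ (by norm_num) hm
    have h3 : (3:ℝ) ≤ d := by rw [hd]; nlinarith
    calc (1:ℝ) = Real.log (Real.exp 1) := (Real.log_exp 1).symm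
      _ ≤ Real.log d := Real.log_le_log (Real.exp_pos 1)
          (le_trans (le_of_lt (lt_trans Real.exp_one_lt_d9 (by norm_num))) h3)
  have hR0 : 0 ≤ R := by
    rw [hR]
    apply mul_nonneg _ (Real.sqrt_nonneg _)
    apply div_nonneg _ hHw.le
    apply mul_nonneg (mul_nonneg (by positivity) (by linarith)) hnHL
  -- pointwise bound on the empirical Rademacher complexity
  have key : ∀ S : Fin N → ValB n m Hv, empRad F S ≤ R := by
    intro S
    set M : ℝ := Hwb / Hw with hMdef
    set sl : ℝ := Hlam / Hw with hsldef
    have hM0 : 0 ≤ M := div_nonneg hHwb.le hHw.le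
    have hsl0 : 0 ≤ sl := div_nonneg hl hHw.le
    set C0 : ℝ := (n:ℝ) * M * Hv + sl with hC0def
    have hC00 : 0 ≤ C0 := by positivity
    -- parameter space
    set ΘT := {p : (Fin n → ℝ) × (Alloc n m → ℝ) //
      (∀ l, 0 ≤ p.1 l ∧ p.1 l ≤ M) ∧ ∀ o, |p.2 o| ≤ sl} with hΘT
    haveI hne : Nonempty ΘT :=
      ⟨⟨(fun _ => 0, fun _ => 0), ⟨fun l => ⟨le_refl 0, hM0⟩, fun o => by simpa using hsl0⟩⟩⟩
    set θ0 : ΘT := ⟨(fun _ => 0, fun _ => 0),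
      ⟨fun l => ⟨le_refl 0, hM0⟩, fun o => by simpa using hsl0⟩⟩ with hθ0
    set g : ΘT → Alloc n m → ValB n m Hv → ℝ := fun θ o v =>
      (∑ l ∈ Finset.univ.erase j, θ.1.1 l * v.1 l (o.1 l)) + θ.1.2 o with hg
    have hcerase : ((Finset.univ.erase j).card : ℝ) ≤ (n:ℝ) := by
      have : (Finset.univ.erase j).card ≤ n :=
        le_trans (Finset.card_le_card (Finset.erase_subset _ _)) (by simp)
      exact_mod_cast this
    have hgC : ∀ θ o (v : ValB n m Hv), |g θ o v| ≤ C0 := by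
      intro θ o v
      have h1 : |∑ l ∈ Finset.univ.erase j, θ.1.1 l * v.1 l (o.1 l)| ≤ (n:ℝ) * M * Hv := by
        calc |∑ l ∈ Finset.univ.erase j, θ.1.1 l * v.1 l (o.1 l)|
            ≤ ∑ l ∈ Finset.univ.erase j, |θ.1.1 l * v.1 l (o.1 l)| :=
              Finset.abs_sum_le_sum_abs _ _
          _ ≤ ∑ _l ∈ Finset.univ.erase j, M * Hv := by
              refine Finset.sum_le_sum fun l _ => ?_
              rw [abs_mul]
              have hvb := (v.2.2 l (o.1 l))
              have hab := (θ.2.1 l)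
              rw [abs_of_nonneg hab.1, abs_of_nonneg hvb.1]
              exact mul_le_mul hab.2 hvb.2 hvb.1 hM0
          _ = ((Finset.univ.erase j).card : ℝ) * (M * Hv) := by
              rw [Finset.sum_const, nsmul_eq_mul]
          _ ≤ (n:ℝ) * (M * Hv) :=
              mul_le_mul_of_nonneg_right hcerase (by positivity)
          _ = (n:ℝ) * M * Hv := by ring
      calc |g θ o v| ≤ |∑ l ∈ Finset.univ.erase j, θ.1.1 l * v.1 l (o.1 l)| + |θ.1.2 o| := by
            simp only [hg]; exact abs_add_le _ _
        _ ≤ (n:ℝ) * M * Hv + sl := add_le_add h1 (θ.2.2 o)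
        _ = C0 := by rw [hC0def]
    set Z : ΘT → (Fin N → Bool) → ℝ := fun θ σ =>
      ∑ i, eps σ i * (Finset.univ.sup' Finset.univ_nonempty fun o => g θ o (S i)) with hZ
    have hsupC : ∀ θ (i : Fin N),
        |Finset.univ.sup' Finset.univ_nonempty fun o => g θ o (S i)| ≤ C0 :=
      fun θ i => abs_sup'_le _ _ _ C0 fun o => hgC θ o (S i)
    have bddZ : ∀ σ, BddAbove (Set.range fun θ => Z θ σ) := by
      intro σ
      simp only [hZ]
      exact bdd_of_bound σ _ C0 hsupC
    have hZθ0 : ∀ σ, Z θ0 σ = 0 := by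
      intro σ
      simp only [hZ]
      have hgz : ∀ i : Fin N,
          (Finset.univ.sup' Finset.univ_nonempty fun o => g θ0 o (S i)) = 0 := by
        intro i
        rw [show (fun o => g θ0 o (S i)) = (fun _ : Alloc n m => (0:ℝ)) from
          funext fun o => by simp [hg, hθ0]]
        exact Finset.sup'_const _ 0
      simp [hgz]
    have hZsup0 : ∀ σ, 0 ≤ ⨆ θ, Z θ σ := fun σ => (hZθ0 σ) ▸ le_ciSup (bddZ σ) θ0
    -- Step A: pass from the class to the parameter space
    have stepA : ∀ σ : Fin N → Bool,
        (⨆ f ∈ F, (N:ℝ)⁻¹ * ∑ i, eps σ i * f (S i)) ≤ (N:ℝ)⁻¹ * ⨆ θ, Z θ σ := by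
      intro σ
      have hb : 0 ≤ (N:ℝ)⁻¹ * ⨆ θ, Z θ σ := mul_nonneg (by positivity) (hZsup0 σ)
      refine Real.iSup_le (fun f => ?_) hb
      by_cases hf : f ∈ F
      · rw [ciSup_pos hf]
        obtain ⟨w, lam, hwbd, hlbd, hfeq⟩ := hf
        have hwj : 0 < w j := lt_of_lt_of_le hHw (hwbd j).1
        have hwl : ∀ l, 0 < w l := fun l => lt_of_lt_of_le hHw (hwbd l).1
        have hinvj : (w j)⁻¹ ≤ Hw⁻¹ := inv_anti₀ hHw (hwbd j).1
        have hamem : ∀ l, 0 ≤ (if l = j then 0 else (w j)⁻¹ * w l) ∧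
            (if l = j then 0 else (w j)⁻¹ * w l) ≤ M := by
          intro l
          by_cases h : l = j
          · simp [h, hM0]
          · simp only [if_neg h]
            constructor
            · exact mul_nonneg (inv_nonneg.mpr hwj.le) (hwl l).le
            · calc (w j)⁻¹ * w l ≤ Hw⁻¹ * Hwb :=
                  mul_le_mul hinvj (hwbd l).2 (hwl l).le (by positivity)
                _ = M := by rw [hMdef, div_eq_inv_mul]
        have hcmem : ∀ o, |(w j)⁻¹ * lam o| ≤ sl := by
          intro o
          rw [abs_mul, abs_of_nonneg (by positivity : (0:ℝ) ≤ (w j)⁻¹)]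
          calc (w j)⁻¹ * |lam o| ≤ Hw⁻¹ * Hlam :=
              mul_le_mul hinvj (hlbd o) (abs_nonneg _) (by positivity)
            _ = sl := by rw [hsldef, div_eq_inv_mul]
        set θf : ΘT := ⟨(fun l => if l = j then 0 else (w j)⁻¹ * w l, fun o => (w j)⁻¹ * lam o),
          ⟨hamem, hcmem⟩⟩ with hθf
        have hval : ∀ v : ValB n m Hv,
            f v = Finset.univ.sup' Finset.univ_nonempty (fun o => g θf o v) := by
          intro v
          simp only [hfeq]
          unfold allocMax
          rw [Finset.comp_sup'_eq_sup'_comp Finset.univ_nonempty (fun z => (w j)⁻¹ * z)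
            (fun x y => mul_max_of_nonneg x y (by positivity))]
          refine Finset.sup'_congr _ rfl fun o _ => ?_
          show (w j)⁻¹ * ((∑ l ∈ Finset.univ.erase j, w l * v.1 l (o.1 l)) + lam o) = g θf o v
          simp only [hg, hθf, mul_add, Finset.mul_sum]
          congr 1
          refine Finset.sum_congr rfl fun l hl => ?_
          rw [if_neg (Finset.mem_erase.mp hl).1]
          ring
        have heq : (N:ℝ)⁻¹ * ∑ i, eps σ i * f (S i) = (N:ℝ)⁻¹ * Z θf σ := by
          congr 1
          simp only [hZ]
          exact Finset.sum_congr rfl fun i _ => by rw [hval (S i)]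
        rw [heq]
        exact mul_le_mul_of_nonneg_left (le_ciSup (bddZ σ) θf) (by positivity)
      · haveI : IsEmpty (f ∈ F) := ⟨hf⟩
        rw [Real.iSup_of_isEmpty]
        exact hb
    -- Step D/E: bound for each fixed allocation
    have stepDE : ∀ o : Alloc n m,
        ∑ σ : Fin N → Bool, ⨆ θ, ∑ i, eps σ i * g θ o (S i) ≤
          2^N * (C0 * Real.sqrt N) := by
      intro o
      set u : Fin n → (Fin N → Bool) → ℝ := fun l σ => ∑ i, eps σ i * (S i).1 l (o.1 l) with hu
      set T : (Fin N → Bool) → ℝ := fun σ => ∑ i, eps σ i with hT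
      have hperσ : ∀ σ, (⨆ θ, ∑ i, eps σ i * g θ o (S i)) ≤
          (∑ l ∈ Finset.univ.erase j, M * |u l σ|) + sl * |T σ| := by
        intro σ
        refine ciSup_le fun θ => ?_
        have hrw : ∑ i, eps σ i * g θ o (S i)
            = (∑ l ∈ Finset.univ.erase j, θ.1.1 l * u l σ) + θ.1.2 o * T σ := by
          simp only [hg, hu, hT]
          rw [Finset.sum_congr rfl (fun i _ => mul_add (eps σ i) _ _), Finset.sum_add_distrib]
          congr 1
          · rw [Finset.sum_congr rfl (fun i _ => Finset.mul_sum _ _ _), Finset.sum_comm]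
            refine Finset.sum_congr rfl fun l _ => ?_
            rw [Finset.mul_sum]
            refine Finset.sum_congr rfl fun i _ => by ring
          · rw [← Finset.sum_mul, mul_comm]
        rw [hrw]
        refine add_le_add (Finset.sum_le_sum fun l _ => ?_) ?_
        · calc θ.1.1 l * u l σ ≤ θ.1.1 l * |u l σ| :=
              mul_le_mul_of_nonneg_left (le_abs_self _) (θ.2.1 l).1
            _ ≤ M * |u l σ| := mul_le_mul_of_nonneg_right (θ.2.1 l).2 (abs_nonneg _)
        · calc θ.1.2 o * T σ ≤ |θ.1.2 o * T σ| := le_abs_self _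
            _ = |θ.1.2 o| * |T σ| := abs_mul _ _
            _ ≤ sl * |T σ| := mul_le_mul_of_nonneg_right (θ.2.2 o) (abs_nonneg _)
      have hul : ∀ l, ∑ σ : Fin N → Bool, |u l σ| ≤ 2^N * (Hv * Real.sqrt N) := by
        intro l
        have hk := khintchine (fun i => (S i).1 l (o.1 l))
        have hs : Real.sqrt (∑ i : Fin N, ((S i).1 l (o.1 l))^2) ≤ Hv * Real.sqrt N := by
          have h1 : (∑ i : Fin N, ((S i).1 l (o.1 l))^2) ≤ ∑ _i : Fin N, Hv^2 := by
            refine Finset.sum_le_sum fun i _ => ?_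
            have hvb := (S i).2.2 l (o.1 l)
            exact pow_le_pow_left₀ hvb.1 hvb.2 2
          calc Real.sqrt (∑ i : Fin N, ((S i).1 l (o.1 l))^2)
              ≤ Real.sqrt (∑ _i : Fin N, Hv^2) := Real.sqrt_le_sqrt h1
            _ = Hv * Real.sqrt N := by
                rw [Finset.sum_const, Finset.card_univ, Fintype.card_fin, nsmul_eq_mul,
                  Real.sqrt_mul (by positivity), Real.sqrt_sq hv]
                ring
        calc ∑ σ : Fin N → Bool, |u l σ|
            ≤ 2^N * Real.sqrt (∑ i : Fin N, ((S i).1 l (o.1 l))^2) := hk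
          _ ≤ 2^N * (Hv * Real.sqrt N) := mul_le_mul_of_nonneg_left hs (by positivity)
      have hTb : ∑ σ : Fin N → Bool, |T σ| ≤ 2^N * Real.sqrt N := by
        have hk := khintchine (fun _ : Fin N => (1:ℝ))
        simp only [mul_one] at hk
        calc ∑ σ : Fin N → Bool, |T σ| ≤ 2^N * Real.sqrt (∑ _i : Fin N, (1:ℝ)^2) := hk
          _ = 2^N * Real.sqrt N := by norm_num
      calc ∑ σ : Fin N → Bool, ⨆ θ, ∑ i, eps σ i * g θ o (S i)
          ≤ ∑ σ : Fin N → Bool, ((∑ l ∈ Finset.univ.erase j, M * |u l σ|) + sl * |T σ|) :=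
            Finset.sum_le_sum fun σ _ => hperσ σ
        _ = (∑ l ∈ Finset.univ.erase j, M * ∑ σ : Fin N → Bool, |u l σ|)
            + sl * ∑ σ : Fin N → Bool, |T σ| := by
            rw [Finset.sum_add_distrib, Finset.sum_comm, ← Finset.mul_sum]
            congr 1
            exact Finset.sum_congr rfl fun l _ => (Finset.mul_sum _ _ _).symm
        _ ≤ (∑ _l ∈ Finset.univ.erase j, M * (2^N * (Hv * Real.sqrt N)))
            + sl * (2^N * Real.sqrt N) :=
            add_le_add (Finset.sum_le_sum fun l _ => mul_le_mul_of_nonneg_left (hul l) hM0)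
              (mul_le_mul_of_nonneg_left hTb hsl0)
        _ ≤ (n:ℝ) * (M * (2^N * (Hv * Real.sqrt N))) + sl * (2^N * Real.sqrt N) := by
            rw [Finset.sum_const, nsmul_eq_mul]
            exact add_le_add_left
              (mul_le_mul_of_nonneg_right hcerase (by positivity)) _
        _ = 2^N * (C0 * Real.sqrt N) := by rw [hC0def]; ring
    -- Step C: split the max over allocations
    have hstepC : ∑ σ : Fin N → Bool, ⨆ θ, Z θ σ ≤
        ∑ o : Alloc n m, ∑ σ : Fin N → Bool, ⨆ θ, ∑ i, eps σ i * g θ o (S i) := by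
      have h := sup'_split (Θ := ΘT) Finset.univ Finset.univ_nonempty
        (fun θ (o : Alloc n m) i => g θ o (S i)) C0 (fun θ o i => hgC θ o (S i))
      simpa only [hZ] using h
    have hfinal1 : ∑ σ : Fin N → Bool, ⨆ θ, Z θ σ ≤
        ((n:ℝ)+1)^m * (2^N * (C0 * Real.sqrt N)) := by
      calc ∑ σ : Fin N → Bool, ⨆ θ, Z θ σ
          ≤ ∑ o : Alloc n m, ∑ σ : Fin N → Bool, ⨆ θ, ∑ i, eps σ i * g θ o (S i) := hstepC
        _ ≤ ∑ _o : Alloc n m, 2^N * (C0 * Real.sqrt N) :=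
            Finset.sum_le_sum fun o _ => stepDE o
        _ = (Fintype.card (Alloc n m) : ℝ) * (2^N * (C0 * Real.sqrt N)) := by
            rw [Finset.sum_const, Finset.card_univ, nsmul_eq_mul]
        _ ≤ ((n:ℝ)+1)^m * (2^N * (C0 * Real.sqrt N)) :=
            mul_le_mul_of_nonneg_right (card_alloc_le n m) (by positivity)
    -- final numeric comparison
    have hC0le : C0 ≤ max Hv 1 * ((n:ℝ) * Hwb + Hlam) / Hw := by
      have hnum : (n:ℝ) * Hwb * Hv + Hlam ≤ max Hv 1 * ((n:ℝ) * Hwb + Hlam) := by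
        have h1 : 0 ≤ (n:ℝ) * Hwb := by positivity
        nlinarith [mul_nonneg h1 (sub_nonneg.mpr hmaxv), mul_nonneg hl (sub_nonneg.mpr hmax1)]
      have hC0eq : C0 = ((n:ℝ) * Hwb * Hv + Hlam) / Hw := by
        rw [hC0def, hMdef, hsldef]
        field_simp
      rw [hC0eq]
      exact (div_le_div_iff_of_pos_right hHw).mpr hnum
    have hsq : Real.sqrt N / N ≤ Real.sqrt (2 * Real.log d / N) := by
      rw [Real.sqrt_div (by linarith : (0:ℝ) ≤ 2 * Real.log d) N]
      have hsN : (0:ℝ) < Real.sqrt N := Real.sqrt_pos.mpr hN0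
      have h1 : Real.sqrt N / N = 1 / Real.sqrt N := by
        rw [show (N:ℝ) = Real.sqrt N * Real.sqrt N from (Real.mul_self_sqrt hN0.le).symm]
        field_simp
        rw [Real.sqrt_sq hsN.le]
      rw [h1]
      exact (div_le_div_iff_of_pos_right hsN).mpr (Real.one_le_sqrt.mpr (by linarith))
    have hemp : empRad F S = ((2:ℝ)^N)⁻¹ * ∑ σ : Fin N → Bool,
        ⨆ f ∈ F, (N:ℝ)⁻¹ * ∑ i, eps σ i * f (S i) := rfl
    calc empRad F S
        = ((2:ℝ)^N)⁻¹ * ∑ σ : Fin N → Bool,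
            ⨆ f ∈ F, (N:ℝ)⁻¹ * ∑ i, eps σ i * f (S i) := hemp
      _ ≤ ((2:ℝ)^N)⁻¹ * ∑ σ : Fin N → Bool, ((N:ℝ)⁻¹ * ⨆ θ, Z θ σ) :=
          mul_le_mul_of_nonneg_left (Finset.sum_le_sum fun σ _ => stepA σ) (by positivity)
      _ = ((2:ℝ)^N)⁻¹ * ((N:ℝ)⁻¹ * ∑ σ : Fin N → Bool, ⨆ θ, Z θ σ) := by
          rw [← Finset.mul_sum]
      _ ≤ ((2:ℝ)^N)⁻¹ * ((N:ℝ)⁻¹ * (((n:ℝ)+1)^m * (2^N * (C0 * Real.sqrt N)))) :=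
          mul_le_mul_of_nonneg_left (mul_le_mul_of_nonneg_left hfinal1 (by positivity))
            (by positivity)
      _ = ((n:ℝ)+1)^m * C0 * (Real.sqrt N / N) := by
          field_simp
      _ ≤ ((n:ℝ)+1)^m * (max Hv 1 * ((n:ℝ) * Hwb + Hlam) / Hw) *
            Real.sqrt (2 * Real.log d / N) := by
          refine mul_le_mul (mul_le_mul_of_nonneg_left hC0le (by positivity)) hsq
            (by positivity) (by positivity)
      _ = R := by rw [hR]; ring
  -- from pointwise bound to the integral bound
  by_cases hInt : MeasureTheory.Integrable (fun S => empRad F S)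
      (MeasureTheory.Measure.pi fun _ : Fin N => D)
  · have hle : radComp D F N ≤ ∫ _ , R ∂(MeasureTheory.Measure.pi fun _ : Fin N => D) := by
      unfold radComp
      exact MeasureTheory.integral_mono hInt (MeasureTheory.integrable_const R) key
    rwa [MeasureTheory.integral_const, probReal_univ, one_smul] at hle
  · have : radComp D F N = 0 := by
      unfold radComp
      exact MeasureTheory.integral_undef hInt
    rw [this]
    exact hR0
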